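/- Under the no-crossing hypothesis, for every unit i ∈ N, every block index k ∈ {1,…,K}, every period t ∈ T_k and every scenario ω ∈ Ω, the excess computed within block k equals the global excess of the concatenated solution: max{0, S_i^t(k) + R_i^t(k) − D_i^{t−1}(k) − d_i^{tω}} = H_i^{tω}, where H_i^{tω} = max{0, S_i^t + R_i^t − D_i^{t−1} − d_i^{tω}} is computed from the concatenated solution on T with the original initial stock s⁰_i. -/

import Mathlib

open Finset

/-- Accumulated stock of unit `i` up to period `t`: initial stock plus extra stock shared
to `i` by the groups it belongs to at periods `t'` with `start ≤ t' ≤ t`. -/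
def Sder {N P : Type} [Fintype P] [DecidableEq N]
    (Ngrp : P → Finset N) (s0 : N → ℤ) (s : N → P → ℕ → ℕ)
    (start : ℕ) (i : N) (t : ℕ) : ℤ :=
  s0 i + ∑ p : P, (if i ∈ Ngrp p then ∑ t' ∈ Finset.Icc start t, (s i p t' : ℤ) else 0)

/-- Amount received by unit `i` until period `t`: shipments `x j i t'` sent at periods
`start ≤ t' ≤ t` that have arrived by `t`, i.e. with `t' + ℓ j i ≤ t`. -/
def Rder {N : Type} [Fintype N] [DecidableEq N]
    (W : Finset (N × N)) (ℓ : N → N → ℕ) (x : N → N → ℕ → ℕ)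
    (start : ℕ) (i : N) (t : ℕ) : ℤ :=
  ∑ j ∈ Finset.univ.filter (fun j => (j, i) ∈ W),
    ∑ t' ∈ (Finset.Icc start t).filter (fun t' => t' + ℓ j i ≤ t), (x j i t' : ℤ)

/-- Amount delivered by unit `i` until period `t` (zero when `t < start`). -/
def Dder {N : Type} [Fintype N] [DecidableEq N]
    (W : Finset (N × N)) (x : N → N → ℕ → ℕ)
    (start : ℕ) (i : N) (t : ℕ) : ℤ :=
  ∑ j ∈ Finset.univ.filter (fun j => (i, j) ∈ W),
    ∑ t' ∈ Finset.Icc start t, (x i j t' : ℤ)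

/-- Effective excess of unit `i` at period `t` under scenario `ω`. -/
def Hder {N P Ω : Type} [Fintype N] [DecidableEq N] [Fintype P]
    (W : Finset (N × N)) (Ngrp : P → Finset N) (ℓ : N → N → ℕ)
    (d : N → ℕ → Ω → ℕ) (s0 : N → ℤ)
    (x : N → N → ℕ → ℕ) (s : N → P → ℕ → ℕ)
    (start : ℕ) (ω : Ω) (i : N) (t : ℕ) : ℤ :=
  max 0 (Sder Ngrp s0 s start i t + Rder W ℓ x start i t
    - Dder W x start i (t - 1) - (d i t ω : ℤ))

/-- Under the no-crossing hypothesis, for every unit `i`, block `k`,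
period `t ∈ T_k` and scenario `ω`, the excess computed within block `k` (from the block
initial stocks `s0b k`) equals the global excess `H_i^{tω}` of the concatenated solution,
computed on the whole horizon from the original initial stock `s0`:
`max{0, S_i^t(k) + R_i^t(k) − D_i^{t−1}(k) − d_i^{tω}} = H_i^{tω}`. -/
theorem block_excess_eq_global
    (N P Ω : Type) [Fintype N] [DecidableEq N] [Fintype P]
    (W : Finset (N × N)) (Ngrp : P → Finset N) (q : ℕ)
    (s0 : N → ℤ) (ℓ : N → N → ℕ) (d : N → ℕ → Ω → ℕ)
    -- breakpoints 1 = tb 0 < tb 1 < ⋯ < tb K = q + 1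
    (K : ℕ) (hK : 1 ≤ K)
    (tb : ℕ → ℕ) (htb0 : tb 0 = 1) (htbK : tb K = q + 1)
    (htbmono : ∀ k < K, tb k < tb (k + 1))
    -- block solutions
    (xb : ℕ → N → N → ℕ → ℕ) (sb : ℕ → N → P → ℕ → ℕ) (yb : ℕ → N → N → ℕ → ℕ)
    -- block initial stocks: s0b 1 = s0 and recursively the available stock at the end of block k
    (s0b : ℕ → N → ℤ)
    (hs0b1 : ∀ i, s0b 1 i = s0 i)
    (hs0brec : ∀ k, 1 ≤ k → k < K → ∀ i,
      s0b (k + 1) i =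
        Sder Ngrp (s0b k) (sb k) (tb (k - 1)) i (tb k - 1)
          + Rder W ℓ (xb k) (tb (k - 1)) i (tb k - 1)
          - Dder W (xb k) (tb (k - 1)) i (tb k - 1))
    -- no-crossing hypothesis: shipments sent in a block arrive within the block
    (hnocross : ∀ k, 1 ≤ k → k ≤ K → ∀ j i, (j, i) ∈ W →
      ∀ t' ∈ Finset.Ico (tb (k - 1)) (tb k), tb k ≤ t' + ℓ j i → xb k j i t' = 0)
    -- the concatenated solution: at each t ∈ T_k it takes the block-k values
    (xc : N → N → ℕ → ℕ) (sc : N → P → ℕ → ℕ) (yc : N → N → ℕ → ℕ)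
    (hxc : ∀ k, 1 ≤ k → k ≤ K → ∀ t ∈ Finset.Ico (tb (k - 1)) (tb k),
      ∀ i j, xc i j t = xb k i j t)
    (hsc : ∀ k, 1 ≤ k → k ≤ K → ∀ t ∈ Finset.Ico (tb (k - 1)) (tb k),
      ∀ (i : N) (p : P), sc i p t = sb k i p t)
    (hyc : ∀ k, 1 ≤ k → k ≤ K → ∀ t ∈ Finset.Ico (tb (k - 1)) (tb k),
      ∀ i j, yc i j t = yb k i j t) :
    ∀ i : N, ∀ k, 1 ≤ k → k ≤ K → ∀ t ∈ Finset.Ico (tb (k - 1)) (tb k), ∀ ω : Ω,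
      max 0 (Sder Ngrp (s0b k) (sb k) (tb (k - 1)) i t
          + Rder W ℓ (xb k) (tb (k - 1)) i t
          - Dder W (xb k) (tb (k - 1)) i (t - 1) - (d i t ω : ℤ))
        = Hder W Ngrp ℓ d s0 xc sc 1 ω i t := by

  -- monotonicity of breakpoints
  have htbmono' : ∀ a b, a ≤ b → b ≤ K → tb a ≤ tb b := by
    intro a b hab hbK
    induction b, hab using Nat.le_induction with
    | base => exact le_rfl
    | succ b hb ih =>
      exact (ih (by omega)).trans (le_of_lt (htbmono b (by omega)))
  have htb1 : ∀ k, k ≤ K → 1 ≤ tb k := by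
    intro k hk
    rw [← htb0]; exact htbmono' 0 k (Nat.zero_le _) hk
  -- every period before tb m belongs to some block
  have hblock : ∀ m, m ≤ K → ∀ t', 1 ≤ t' → t' < tb m →
      ∃ k', 1 ≤ k' ∧ k' ≤ m ∧ tb (k' - 1) ≤ t' ∧ t' < tb k' := by
    intro m
    induction m with
    | zero => intro _ t' h1 h2; rw [htb0] at h2; omega
    | succ m ih =>
      intro hm t' h1 h2
      by_cases hc : t' < tb m
      · obtain ⟨k', hk1, hk2, hk3, hk4⟩ := ih (by omega) t' h1 hc
        exact ⟨k', hk1, by omega, hk3, hk4⟩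
      · exact ⟨m + 1, by omega, le_rfl, by simpa using not_lt.mp hc, h2⟩
  -- no-crossing for the concatenated solution
  have hcross : ∀ j i, (j, i) ∈ W → ∀ t', 1 ≤ t' → ∀ b, b ≤ K → t' < tb b →
      tb b ≤ t' + ℓ j i → xc j i t' = 0 := by
    intro j i hW t' h1 b hbK hlt hle
    obtain ⟨k', hk1, hk2, hk3, hk4⟩ := hblock b hbK t' h1 hlt
    have hmem : t' ∈ Finset.Ico (tb (k' - 1)) (tb k') := Finset.mem_Ico.mpr ⟨hk3, hk4⟩
    rw [hxc k' hk1 (hk2.trans hbK) t' hmem j i]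
    exact hnocross k' hk1 (hk2.trans hbK) j i hW t' hmem
      (le_trans (htbmono' k' b hk2 hbK) hle)
  -- generic splitting of a sum over Icc 1 t at a
  have hsplit : ∀ (f : ℕ → ℤ) (a t : ℕ), 1 ≤ a → a - 1 ≤ t →
      ∑ t' ∈ Finset.Icc 1 t, f t' =
        ∑ t' ∈ Finset.Icc 1 (a - 1), f t' + ∑ t' ∈ Finset.Icc a t, f t' := by
    intro f a t ha hat
    have h1 : Finset.Icc 1 t = Finset.Ioc 0 t := by rw [← Finset.Icc_add_one_left_eq_Ioc]; rfl
    have h2 : Finset.Icc 1 (a - 1) = Finset.Ioc 0 (a - 1) := by rw [← Finset.Icc_add_one_left_eq_Ioc]; rfl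
    have h3 : Finset.Icc a t = Finset.Ioc (a - 1) t := by
      rw [← Finset.Icc_add_one_left_eq_Ioc]; congr 1; omega
    rw [h1, h2, h3, Finset.sum_Ioc_consecutive f (Nat.zero_le _) hat]
  -- split of D
  have hDsplit : ∀ k, 1 ≤ k → k ≤ K → ∀ i t, tb (k - 1) - 1 ≤ t → t < tb k →
      Dder W xc 1 i t =
        Dder W xc 1 i (tb (k - 1) - 1) + Dder W (xb k) (tb (k - 1)) i t := by
    intro k hk1 hkK i t h1 h2
    unfold Dder
    rw [← Finset.sum_add_distrib]
    refine Finset.sum_congr rfl fun j _ => ?_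
    have ha : 1 ≤ tb (k - 1) := htb1 (k - 1) (by omega)
    rw [hsplit (fun t' => (xc i j t' : ℤ)) (tb (k - 1)) t ha h1]
    congr 1
    refine Finset.sum_congr rfl fun t' ht' => ?_
    obtain ⟨hl, hr⟩ := Finset.mem_Icc.mp ht'
    rw [hxc k hk1 hkK t' (Finset.mem_Ico.mpr ⟨hl, lt_of_le_of_lt hr h2⟩)]
  -- split of S
  have hSsplit : ∀ k, 1 ≤ k → k ≤ K → ∀ i t, tb (k - 1) - 1 ≤ t → t < tb k →
      Sder Ngrp s0 sc 1 i t =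
        Sder Ngrp s0 sc 1 i (tb (k - 1) - 1) +
          (Sder Ngrp (s0b k) (sb k) (tb (k - 1)) i t - s0b k i) := by
    intro k hk1 hkK i t h1 h2
    have ha : 1 ≤ tb (k - 1) := htb1 (k - 1) (by omega)
    have key : ∀ p : P,
        (if i ∈ Ngrp p then ∑ t' ∈ Finset.Icc 1 t, (sc i p t' : ℤ) else 0) =
          (if i ∈ Ngrp p then ∑ t' ∈ Finset.Icc 1 (tb (k - 1) - 1), (sc i p t' : ℤ) else 0) +
          (if i ∈ Ngrp p then ∑ t' ∈ Finset.Icc (tb (k - 1)) t, (sb k i p t' : ℤ) else 0) := by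
      intro p
      by_cases hp : i ∈ Ngrp p
      · simp only [if_pos hp]
        rw [hsplit (fun t' => (sc i p t' : ℤ)) (tb (k - 1)) t ha h1]
        congr 1
        refine Finset.sum_congr rfl fun t' ht' => ?_
        obtain ⟨hl, hr⟩ := Finset.mem_Icc.mp ht'
        rw [hsc k hk1 hkK t' (Finset.mem_Ico.mpr ⟨hl, lt_of_le_of_lt hr h2⟩)]
      · simp [hp]
    unfold Sder
    rw [Finset.sum_congr rfl fun p _ => key p, Finset.sum_add_distrib]
    ring
  -- split of R
  have hRsplit : ∀ k, 1 ≤ k → k ≤ K → ∀ i t, tb (k - 1) - 1 ≤ t → t < tb k →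
      Rder W ℓ xc 1 i t =
        Rder W ℓ xc 1 i (tb (k - 1) - 1) + Rder W ℓ (xb k) (tb (k - 1)) i t := by
    intro k hk1 hkK i t h1 h2
    have ha : 1 ≤ tb (k - 1) := htb1 (k - 1) (by omega)
    unfold Rder
    rw [← Finset.sum_add_distrib]
    refine Finset.sum_congr rfl fun j hj => ?_
    have hW : (j, i) ∈ W := (Finset.mem_filter.mp hj).2
    rw [Finset.sum_filter, Finset.sum_filter, Finset.sum_filter,
      hsplit (fun t' => if t' + ℓ j i ≤ t then (xc j i t' : ℤ) else 0) (tb (k - 1)) t ha h1]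
    congr 1
    · refine Finset.sum_congr rfl fun t' ht' => ?_
      obtain ⟨hl, hr⟩ := Finset.mem_Icc.mp ht'
      by_cases hle : t' + ℓ j i ≤ tb (k - 1) - 1
      · rw [if_pos hle, if_pos (hle.trans h1)]
      · rw [if_neg hle]
        by_cases hle2 : t' + ℓ j i ≤ t
        · rw [if_pos hle2]
          have hz : xc j i t' = 0 :=
            hcross j i hW t' hl (k - 1) (by omega) (by omega) (by omega)
          rw [hz]; simp
        · rw [if_neg hle2]
    · refine Finset.sum_congr rfl fun t' ht' => ?_
      obtain ⟨hl, hr⟩ := Finset.mem_Icc.mp ht'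
      rw [hxc k hk1 hkK t' (Finset.mem_Ico.mpr ⟨hl, lt_of_le_of_lt hr h2⟩)]
  -- the block initial stock equals the global state at the end of the previous block
  have hstate : ∀ k, 1 ≤ k → k ≤ K → ∀ i,
      s0b k i = Sder Ngrp s0 sc 1 i (tb (k - 1) - 1) + Rder W ℓ xc 1 i (tb (k - 1) - 1)
        - Dder W xc 1 i (tb (k - 1) - 1) := by
    intro k
    induction k with
    | zero => omega
    | succ k ih =>
      intro _ hkK i
      by_cases hk : k = 0
      · subst hk
        simp only [Nat.add_sub_cancel, htb0, Nat.sub_self]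
        rw [hs0b1]
        unfold Sder Rder Dder
        simp
      · have hk1 : 1 ≤ k := by omega
        have hkK' : k ≤ K := by omega
        have hkltK : k < K := by omega
        have hlt : tb (k - 1) < tb k := by
          have : tb (k - 1) < tb (k - 1 + 1) := htbmono (k - 1) (by omega)
          simpa [Nat.sub_add_cancel hk1] using this
        have htbk1 : 1 ≤ tb k := htb1 k hkK'
        have hr1 : tb (k - 1) - 1 ≤ tb k - 1 := by omega
        have hr2 : tb k - 1 < tb k := by omega
        have e1 := hSsplit k hk1 hkK' i (tb k - 1) hr1 hr2
        have e2 := hRsplit k hk1 hkK' i (tb k - 1) hr1 hr2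
        have e3 := hDsplit k hk1 hkK' i (tb k - 1) hr1 hr2
        have ih' := ih hk1 hkK' i
        rw [hs0brec k hk1 hkltK i]
        simp only [Nat.add_sub_cancel]
        rw [e1, e2, e3] at *
        linarith [ih']
  -- conclusion
  intro i k hk1 hkK t ht ω
  obtain ⟨ht1, ht2⟩ := Finset.mem_Ico.mp ht
  have ha : 1 ≤ tb (k - 1) := htb1 (k - 1) (by omega)
  have e1 := hSsplit k hk1 hkK i t (by omega) ht2
  have e2 := hRsplit k hk1 hkK i t (by omega) ht2
  have e3 := hDsplit k hk1 hkK i (t - 1) (by omega) (by omega)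
  have e4 := hstate k hk1 hkK i
  unfold Hder
  congr 1
  rw [e1, e2, e3]
  linarith [e4]
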